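/- arXiv:2409.15539 — 2 statements merged into one kernel-verified Lean document; each statement's English description precedes it below -/
import Mathlib

section
/- The one-dimensional death-process probabilities are stochastic: for θ > 0, rates λ_h = h(θ + h − 1)/2, and any m ≥ 0 and s ≥ 0, Σ_{n=0}^{m} p_{m,n}(s) = 1, where p_{m,m}(s) = e^{−λ_m s} and p_{m,n}(s) = C_{m,n}(s) for n < m as defined via the partial-fraction formula. -/
/-- The death process rates `λ_h = h(θ + h - 1)/2`. -/
noncomputable def deathRate (θ : ℝ) (h : ℕ) : ℝ := h * (θ + h - 1) / 2

/-- The partial-fraction expression `C_{m,n}(s)`. -/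
noncomputable def Cdeath (θ : ℝ) (m n : ℕ) (s : ℝ) : ℝ :=
  (∏ h ∈ Finset.Icc (n + 1) m, deathRate θ h) * (-1 : ℝ) ^ (m - n) *
    ∑ k ∈ Finset.Icc n m, Real.exp (-(deathRate θ k) * s) /
      ∏ h ∈ (Finset.Icc n m).erase k, (deathRate θ k - deathRate θ h)

/-- Transition probabilities of the one-dimensional pure-death process. -/
noncomputable def pDeath (θ : ℝ) (m n : ℕ) (s : ℝ) : ℝ :=
  if n = m then Real.exp (-(deathRate θ m) * s)
  else if n < m then Cdeath θ m n s
  else 0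

lemma deathRate_strictMono (θ : ℝ) (hθ : 0 < θ) : StrictMono (deathRate θ) := by
  apply strictMono_nat_of_lt_succ
  intro n
  unfold deathRate
  push_cast
  nlinarith [Nat.cast_nonneg (α := ℝ) n]

lemma deathRate_zero (θ : ℝ) : deathRate θ 0 = 0 := by simp [deathRate]

lemma prod_sub_ne_zero (θ : ℝ) (hθ : 0 < θ) (k : ℕ) (s : Finset ℕ) (hk : k ∉ s) :
    ∏ h ∈ s, (deathRate θ k - deathRate θ h) ≠ 0 := by
  rw [Finset.prod_ne_zero_iff]
  intro h hh
  exact sub_ne_zero.mpr fun e => hk (((deathRate_strictMono θ hθ).injective e) ▸ hh)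

lemma key (θ : ℝ) (hθ : 0 < θ) (m k : ℕ) (hk : k ≤ m) :
    ∀ d j, j + d = k →
    ∑ n ∈ Finset.Icc j k, ((-1:ℝ))^(m-n) * (∏ h ∈ Finset.Icc (n+1) m, deathRate θ h) /
        ∏ h ∈ (Finset.Icc n m).erase k, (deathRate θ k - deathRate θ h)
    = (-1:ℝ)^(m-j) * ((∏ h ∈ Finset.Ico j k, deathRate θ h) *
        ∏ h ∈ Finset.Icc (k+1) m, deathRate θ h) /
        ∏ h ∈ (Finset.Icc j m).erase k, (deathRate θ k - deathRate θ h) := by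
  intro d
  induction d with
  | zero =>
      intro j hj
      have : j = k := by omega
      subst this
      simp [Finset.Icc_self, Finset.Ico_self]
  | succ d ih =>
      intro j hj
      have hjk : j < k := by omega
      have hsplit : Finset.Icc j k = insert j (Finset.Icc (j+1) k) := by
        ext x; simp; omega
      rw [hsplit, Finset.sum_insert (by simp)]
      rw [ih (j+1) (by omega)]
      have hD : ∏ h ∈ (Finset.Icc j m).erase k, (deathRate θ k - deathRate θ h)
          = (deathRate θ k - deathRate θ j) *
            ∏ h ∈ (Finset.Icc (j+1) m).erase k, (deathRate θ k - deathRate θ h) := by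
        have : (Finset.Icc j m).erase k = insert j ((Finset.Icc (j+1) m).erase k) := by
          ext x; simp [Finset.mem_erase]; omega
        rw [this, Finset.prod_insert (by simp)]
      have hE : ∏ h ∈ Finset.Icc (j+1) m, deathRate θ h
          = (∏ h ∈ Finset.Ico (j+1) k, deathRate θ h) *
            (deathRate θ k * ∏ h ∈ Finset.Icc (k+1) m, deathRate θ h) := by
        rw [← Finset.Ico_add_one_right_eq_Icc, ← Finset.Ico_add_one_right_eq_Icc,
          ← Finset.prod_Ico_consecutive _ (by omega : j+1 ≤ k) (by omega : k ≤ m+1),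
          Finset.prod_eq_prod_Ico_succ_bot (by omega : k < m+1)]
      have hP : ∏ h ∈ Finset.Ico j k, deathRate θ h
          = deathRate θ j * ∏ h ∈ Finset.Ico (j+1) k, deathRate θ h :=
        Finset.prod_eq_prod_Ico_succ_bot hjk _
      have hsgn : ((-1:ℝ))^(m-j) = -((-1:ℝ))^(m-(j+1)) := by
        have h1 : m - j = (m - (j+1)) + 1 := by omega
        rw [h1, pow_succ, mul_neg_one]
      rw [hD, hE, hP, hsgn]
      have hDne : ∏ h ∈ (Finset.Icc (j+1) m).erase k, (deathRate θ k - deathRate θ h) ≠ 0 :=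
        prod_sub_ne_zero θ hθ k _ (Finset.notMem_erase _ _)
      have hca : deathRate θ k - deathRate θ j ≠ 0 :=
        sub_ne_zero.mpr fun e => (by omega : k ≠ j) ((deathRate_strictMono θ hθ).injective e)
      field_simp
      ring

lemma coeff_eval (θ : ℝ) (hθ : 0 < θ) (m k : ℕ) (hk : k ≤ m) :
    ∑ n ∈ Finset.Icc 0 k, ((-1:ℝ))^(m-n) * (∏ h ∈ Finset.Icc (n+1) m, deathRate θ h) /
        ∏ h ∈ (Finset.Icc n m).erase k, (deathRate θ k - deathRate θ h)
    = if k = 0 then 1 else 0 := by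
  rw [key θ hθ m k hk k 0 (by omega)]
  rcases eq_or_ne k 0 with h0 | h0
  · subst h0
    simp only [if_pos rfl, Finset.Ico_self, Finset.prod_empty, one_mul]
    have he : (Finset.Icc 0 m).erase 0 = Finset.Icc 1 m := by ext x; simp; omega
    rw [he]
    have h1 : ∀ h ∈ Finset.Icc 1 m, deathRate θ 0 - deathRate θ h = (-1) * (deathRate θ h) := by
      intro h _; rw [deathRate_zero]; ring
    rw [Finset.prod_congr rfl h1, Finset.prod_mul_distrib, Finset.prod_const]
    have hcard : (Finset.Icc 1 m).card = m := by simp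
    rw [hcard]
    have hne : ∏ h ∈ Finset.Icc 1 m, deathRate θ h ≠ 0 := by
      rw [Finset.prod_ne_zero_iff]
      intro h hh
      simp at hh
      have := deathRate_strictMono θ hθ (show 0 < h by omega)
      rw [deathRate_zero] at this
      linarith
    field_simp
    simp
  · rw [if_neg h0]
    have : ∏ h ∈ Finset.Ico 0 k, deathRate θ h = 0 :=
      Finset.prod_eq_zero (by simp; omega : 0 ∈ Finset.Ico 0 k) (deathRate_zero θ)
    rw [this]
    simp

theorem pDeath_stochastic (θ : ℝ) (hθ : 0 < θ) (m : ℕ) (s : ℝ) (hs : 0 ≤ s) :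
    ∑ n ∈ Finset.range (m + 1), pDeath θ m n s = 1 := by
  have hC : ∀ n ∈ Finset.range (m + 1), pDeath θ m n s = Cdeath θ m n s := by
    intro n hn
    rw [Finset.mem_range, Nat.lt_succ_iff] at hn
    rcases eq_or_lt_of_le hn with h | h
    · subst h
      simp [pDeath, Cdeath, Finset.Icc_self]
    · simp [pDeath, Nat.ne_of_lt h, h]
  rw [Finset.sum_congr rfl hC]
  have hexp : ∀ n : ℕ, Cdeath θ m n s
      = ∑ k ∈ Finset.Icc n m, ((-1:ℝ))^(m-n) * (∏ h ∈ Finset.Icc (n+1) m, deathRate θ h) /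
        (∏ h ∈ (Finset.Icc n m).erase k, (deathRate θ k - deathRate θ h)) *
        Real.exp (-(deathRate θ k) * s) := by
    intro n
    rw [Cdeath, Finset.mul_sum]
    exact Finset.sum_congr rfl fun k _ => by ring
  rw [Finset.sum_congr rfl fun n _ => hexp n]
  have hswap : ∑ n ∈ Finset.range (m+1), ∑ k ∈ Finset.Icc n m,
        ((-1:ℝ))^(m-n) * (∏ h ∈ Finset.Icc (n+1) m, deathRate θ h) /
        (∏ h ∈ (Finset.Icc n m).erase k, (deathRate θ k - deathRate θ h)) *
        Real.exp (-(deathRate θ k) * s)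
      = ∑ k ∈ Finset.range (m+1), ∑ n ∈ Finset.Icc 0 k,
        ((-1:ℝ))^(m-n) * (∏ h ∈ Finset.Icc (n+1) m, deathRate θ h) /
        (∏ h ∈ (Finset.Icc n m).erase k, (deathRate θ k - deathRate θ h)) *
        Real.exp (-(deathRate θ k) * s) := by
    exact Finset.sum_comm' fun x y => by simp [Nat.lt_succ_iff]; omega
  rw [hswap]
  have hterm : ∀ k ∈ Finset.range (m+1),
      (∑ n ∈ Finset.Icc 0 k,
        ((-1:ℝ))^(m-n) * (∏ h ∈ Finset.Icc (n+1) m, deathRate θ h) /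
        (∏ h ∈ (Finset.Icc n m).erase k, (deathRate θ k - deathRate θ h)) *
        Real.exp (-(deathRate θ k) * s))
      = (if k = 0 then 1 else 0) * Real.exp (-(deathRate θ k) * s) := by
    intro k hk
    rw [Finset.mem_range, Nat.lt_succ_iff] at hk
    rw [← Finset.sum_mul, coeff_eval θ hθ m k hk]
  rw [Finset.sum_congr rfl hterm]
  rw [Finset.sum_eq_single 0]
  · simp [deathRate_zero]
  · intro k _ hk; simp [hk]
  · simp
end

section
/- Solution of the death-process forward equations: for θ > 0 and distinct rates λ_h = h(θ + h − 1)/2, the functions f_n(s) = p_{m,n}(s) (with p_{m,m}(s) = e^{−λ_m s} and p_{m,n}(s) = C_{m,n}(s) for n < m) satisfy the ODE system f_m'(s) = −λ_m f_m(s) and f_n'(s) = λ_{n+1} f_{n+1}(s) − λ_n f_n(s) for 0 ≤ n < m, with initial conditions f_m(0) = 1 and f_n(0) = 0 for n < m. -/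
lemma deathRate_injective {θ : ℝ} (hθ : 0 < θ) : Function.Injective (deathRate θ) := by
  intro a b hab
  by_contra hne
  unfold deathRate at hab
  have h1 : ((a : ℝ) - b) * (θ + a + b - 1) = 0 := by linear_combination 2 * hab
  rcases mul_eq_zero.mp h1 with h | h
  · exact hne (Nat.cast_injective (by linarith : (a : ℝ) = b))
  · have hab1 : 1 ≤ a + b := by omega
    have : (1 : ℝ) ≤ (a : ℝ) + b := by exact_mod_cast hab1
    linarith

lemma deathRate_sub_ne_zero {θ : ℝ} (hθ : 0 < θ) {a b : ℕ} (h : a ≠ b) :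
    deathRate θ a - deathRate θ b ≠ 0 :=
  sub_ne_zero_of_ne (fun he => h (deathRate_injective hθ he))

/-- Sum of inverses of products of differences at distinct nodes vanishes
(top Lagrange coefficient of the constant polynomial 1). -/
lemma sum_inv_prod_erase_eq_zero {F : Type*} [Field F] {ι : Type*} [DecidableEq ι]
    (s : Finset ι) (v : ι → F) (hvs : Set.InjOn v s) (hs : 2 ≤ s.card) :
    ∑ k ∈ s, (∏ h ∈ s.erase k, (v k - v h))⁻¹ = 0 := by
  have hne : s.Nonempty := Finset.card_pos.mp (by omega)
  have hb := Lagrange.sum_basis hvs hne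
  have hc := congrArg (fun p => Polynomial.coeff p (s.card - 1)) hb
  simp only [Polynomial.finset_sum_coeff] at hc
  have hone : (1 : Polynomial F).coeff (s.card - 1) = 0 := by
    rw [Polynomial.coeff_one]
    simp only [if_neg (by omega : ¬ s.card - 1 = 0)]
  rw [hone] at hc
  rw [← hc]
  refine Finset.sum_congr rfl fun k hk => ?_
  have hdeg := Lagrange.natDegree_basis hvs hk
  have hlc : (Lagrange.basis s v k).coeff (s.card - 1) = (Lagrange.basis s v k).leadingCoeff := by
    rw [← hdeg]; rfl
  rw [hlc]
  unfold Lagrange.basis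
  rw [Polynomial.leadingCoeff_prod]
  rw [← Finset.prod_inv_distrib]
  refine Finset.prod_congr rfl fun h hh => ?_
  unfold Lagrange.basisDivisor
  rw [Polynomial.leadingCoeff_mul, Polynomial.leadingCoeff_C,
    (Polynomial.monic_X_sub_C (v h)).leadingCoeff, mul_one]

lemma Cdeath_self (θ : ℝ) (m : ℕ) (s : ℝ) :
    Cdeath θ m m s = Real.exp (-(deathRate θ m) * s) := by
  unfold Cdeath
  rw [Finset.Icc_self, Finset.Icc_eq_empty (by omega : ¬ m + 1 ≤ m)]
  simp

lemma pDeath_eq_Cdeath {θ : ℝ} {m n : ℕ} (h : n ≤ m) (s : ℝ) :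
    pDeath θ m n s = Cdeath θ m n s := by
  unfold pDeath
  rcases eq_or_lt_of_le h with he | hlt
  · rw [if_pos he, he, Cdeath_self]
  · rw [if_neg (Nat.ne_of_lt hlt), if_pos hlt]

lemma hasDerivAt_Cdeath (θ : ℝ) (m n : ℕ) (s : ℝ) :
    HasDerivAt (fun s => Cdeath θ m n s)
      ((∏ h ∈ Finset.Icc (n + 1) m, deathRate θ h) * (-1 : ℝ) ^ (m - n) *
        ∑ k ∈ Finset.Icc n m, (-(deathRate θ k)) * Real.exp (-(deathRate θ k) * s) /
          ∏ h ∈ (Finset.Icc n m).erase k, (deathRate θ k - deathRate θ h)) s := by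
  have hsum : HasDerivAt (fun s => ∑ k ∈ Finset.Icc n m, Real.exp (-(deathRate θ k) * s) /
      ∏ h ∈ (Finset.Icc n m).erase k, (deathRate θ k - deathRate θ h))
      (∑ k ∈ Finset.Icc n m, (-(deathRate θ k)) * Real.exp (-(deathRate θ k) * s) /
        ∏ h ∈ (Finset.Icc n m).erase k, (deathRate θ k - deathRate θ h)) s := by
    refine HasDerivAt.fun_sum fun k _ => ?_
    have h1 : HasDerivAt (fun s : ℝ => -(deathRate θ k) * s) (-(deathRate θ k)) s := by
      simpa using (hasDerivAt_id s).const_mul (-(deathRate θ k))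
    have h3 := (h1.exp).div_const
      (∏ h ∈ (Finset.Icc n m).erase k, (deathRate θ k - deathRate θ h))
    exact h3.congr_deriv (by ring)
  exact hsum.const_mul _

theorem pDeath_forward_equations (θ : ℝ) (hθ : 0 < θ) (m : ℕ) :
    (∀ s : ℝ, HasDerivAt (fun s => pDeath θ m m s)
      (-(deathRate θ m) * pDeath θ m m s) s) ∧
    (∀ n < m, ∀ s : ℝ, HasDerivAt (fun s => pDeath θ m n s)
      (deathRate θ (n + 1) * pDeath θ m (n + 1) s - deathRate θ n * pDeath θ m n s) s) ∧
    pDeath θ m m 0 = 1 ∧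
    (∀ n < m, pDeath θ m n 0 = 0) := by
  set lam := deathRate θ with hlam
  refine ⟨?_, ?_, ?_, ?_⟩
  · intro s
    simp only [pDeath, if_pos rfl]
    have h1 : HasDerivAt (fun s : ℝ => -(lam m) * s) (-(lam m)) s := by
      simpa using (hasDerivAt_id s).const_mul (-(lam m))
    have h2 := h1.exp
    convert h2 using 1
    · simp only [↓reduceIte, ← hlam]
    simp only [↓reduceIte, ← hlam]
    ring
  · intro n hnm s
    have hfun : (fun s => pDeath θ m n s) = fun s => Cdeath θ m n s := by
      funext t; exact pDeath_eq_Cdeath (le_of_lt hnm) t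
    rw [hfun, pDeath_eq_Cdeath (le_of_lt hnm), pDeath_eq_Cdeath hnm]
    have hd := hasDerivAt_Cdeath θ m n s
    convert hd using 1
    -- algebraic identity
    have hkey : (∏ h ∈ Finset.Icc (n + 1) m, lam h) * (-1 : ℝ) ^ (m - n) *
        ∑ k ∈ Finset.Icc n m, (-(lam k)) * Real.exp (-(lam k) * s) /
          ∏ h ∈ (Finset.Icc n m).erase k, (lam k - lam h)
        = lam (n + 1) * Cdeath θ m (n + 1) s - lam n * Cdeath θ m n s := by
      unfold Cdeath
      rw [← hlam]
      set P := ∏ h ∈ Finset.Icc (n + 1) m, lam h with hP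
      -- product identity
      have hins : Finset.Icc (n + 1) m = insert (n + 1) (Finset.Icc (n + 2) m) := by
        ext x; simp only [Finset.mem_Icc, Finset.mem_insert]; omega
      have hnotmem : n + 1 ∉ Finset.Icc (n + 2) m := by simp
      have hPP : lam (n + 1) * ∏ h ∈ Finset.Icc (n + 2) m, lam h = P := by
        rw [hP, hins, Finset.prod_insert hnotmem]
      -- sign identity
      have hsign : ((-1 : ℝ)) ^ (m - n) = (-1) * (-1 : ℝ) ^ (m - (n + 1)) := by
        have : m - n = (m - (n + 1)) + 1 := by omega
        rw [this, pow_succ]; ring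
      -- sum identity
      have hsumid : ∑ k ∈ Finset.Icc n m, (-(lam k)) * Real.exp (-(lam k) * s) /
            ∏ h ∈ (Finset.Icc n m).erase k, (lam k - lam h)
          = (- ∑ k ∈ Finset.Icc (n + 1) m, Real.exp (-(lam k) * s) /
              ∏ h ∈ (Finset.Icc (n + 1) m).erase k, (lam k - lam h))
            - lam n * ∑ k ∈ Finset.Icc n m, Real.exp (-(lam k) * s) /
              ∏ h ∈ (Finset.Icc n m).erase k, (lam k - lam h) := by
        rw [eq_sub_iff_add_eq, Finset.mul_sum, ← Finset.sum_add_distrib,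
          ← Finset.sum_neg_distrib]
        have hsplit : Finset.Icc n m = insert n (Finset.Icc (n + 1) m) := by
          ext x; simp only [Finset.mem_Icc, Finset.mem_insert]; omega
        rw [hsplit, Finset.sum_insert (by simp)]
        have hzero : (-(lam n)) * Real.exp (-(lam n) * s) /
            (∏ h ∈ (insert n (Finset.Icc (n + 1) m)).erase n, (lam n - lam h))
            + lam n * (Real.exp (-(lam n) * s) /
              ∏ h ∈ (insert n (Finset.Icc (n + 1) m)).erase n, (lam n - lam h)) = 0 := by
          ring
        rw [hzero, zero_add]
        refine Finset.sum_congr rfl fun k hk => ?_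
        have hk' : k ∈ Finset.Icc (n + 1) m := hk
        have hkn : n + 1 ≤ k := (Finset.mem_Icc.mp hk').1
        have herase : (insert n (Finset.Icc (n + 1) m)).erase k
            = insert n ((Finset.Icc (n + 1) m).erase k) := by
          ext x
          simp only [Finset.mem_erase, Finset.mem_insert, Finset.mem_Icc]
          constructor
          · rintro ⟨hxk, hx | hx⟩
            · exact Or.inl hx
            · exact Or.inr ⟨hxk, hx⟩
          · rintro (hx | ⟨hxk, hx⟩)
            · exact ⟨by omega, Or.inl hx⟩
            · exact ⟨hxk, Or.inr hx⟩
        have hnnot : n ∉ (Finset.Icc (n + 1) m).erase k := by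
          simp only [Finset.mem_erase, Finset.mem_Icc]; omega
        have hDk : ∏ h ∈ (insert n (Finset.Icc (n + 1) m)).erase k, (lam k - lam h)
            = (lam k - lam n) * ∏ h ∈ (Finset.Icc (n + 1) m).erase k, (lam k - lam h) := by
          rw [herase, Finset.prod_insert hnnot]
        have hknne : lam k - lam n ≠ 0 := deathRate_sub_ne_zero hθ (by omega)
        rw [hDk]
        have h4 : (-(lam k)) * Real.exp (-(lam k) * s) /
              ((lam k - lam n) * ∏ h ∈ (Finset.Icc (n + 1) m).erase k, (lam k - lam h))
            + lam n * (Real.exp (-(lam k) * s) /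
              ((lam k - lam n) * ∏ h ∈ (Finset.Icc (n + 1) m).erase k, (lam k - lam h)))
            = -((lam k - lam n) * Real.exp (-(lam k) * s) /
              ((lam k - lam n) * ∏ h ∈ (Finset.Icc (n + 1) m).erase k, (lam k - lam h))) := by
          ring
        rw [h4, mul_div_mul_left _ _ hknne]
      rw [hsumid, ← hPP, hsign]
      ring
    rw [hkey]
  · simp [pDeath]
  · intro n hnm
    rw [pDeath_eq_Cdeath (le_of_lt hnm)]
    unfold Cdeath
    have hsum0 : ∑ k ∈ Finset.Icc n m, Real.exp (-(deathRate θ k) * 0) /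
        ∏ h ∈ (Finset.Icc n m).erase k, (deathRate θ k - deathRate θ h) = 0 := by
      have := sum_inv_prod_erase_eq_zero (Finset.Icc n m) (deathRate θ)
        ((deathRate_injective hθ).injOn) (by rw [Nat.card_Icc]; omega)
      have heq : ∑ k ∈ Finset.Icc n m, Real.exp (-(deathRate θ k) * 0) /
          ∏ h ∈ (Finset.Icc n m).erase k, (deathRate θ k - deathRate θ h)
          = ∑ k ∈ Finset.Icc n m,
            (∏ h ∈ (Finset.Icc n m).erase k, (deathRate θ k - deathRate θ h))⁻¹ := by
        refine Finset.sum_congr rfl fun k _ => ?_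
        rw [mul_zero, Real.exp_zero, one_div]
      rw [heq, this]
    rw [hsum0, mul_zero]
end
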